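/- Let n be a positive natural number, γ > 0, δ > 0, K ≥ 0, C ≥ 0, μ > 0, and let Ψ : ℝ → ℝ^{n×n} be continuous with Ψ(t)ᵀΨ(t) ≥ δ·I_n and operator norm ‖Ψ(t)‖ ≤ K for all t ≥ 0, and let ε : ℝ → ℝ^n be continuous with |ε(t)| ≤ C·e^{−μt} for all t ≥ 0. If ϑ̃ : ℝ → ℝ^n is differentiable and satisfies ϑ̃'(t) = −γ·Ψ(t)ᵀΨ(t)·ϑ̃(t) + γ·Ψ(t)ᵀ·ε(t), then ϑ̃(t) → 0 as t → ∞; moreover, for any ν with 0 < ν < min(γδ, μ) there exists C' ≥ 0 such that |ϑ̃(t)| ≤ C'·e^{−νt} for all t ≥ 0. -/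

import Mathlib

open Matrix Filter

set_option maxHeartbeats 1000000 in
theorem gradient_descent_perturbed_convergence (n : ℕ) (hn : 0 < n)
    (γ δ K C μ : ℝ) (hγ : 0 < γ) (hδ : 0 < δ) (hK : 0 ≤ K) (hC : 0 ≤ C) (hμ : 0 < μ)
    (Ψ : ℝ → Matrix (Fin n) (Fin n) ℝ) (hΨ : Continuous Ψ)
    (hPE : ∀ t : ℝ, 0 ≤ t → ∀ x : Fin n → ℝ,
      δ * ∑ j : Fin n, x j ^ 2 ≤ ∑ j : Fin n, (Ψ t *ᵥ x) j ^ 2)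
    (hbound : ∀ t : ℝ, 0 ≤ t → ∀ x : Fin n → ℝ,
      Real.sqrt (∑ j : Fin n, (Ψ t *ᵥ x) j ^ 2) ≤ K * Real.sqrt (∑ j : Fin n, x j ^ 2))
    (ε : ℝ → Fin n → ℝ) (hεcont : Continuous ε)
    (hε : ∀ t : ℝ, 0 ≤ t →
      Real.sqrt (∑ j : Fin n, ε t j ^ 2) ≤ C * Real.exp (-μ * t))
    (ϑtil : ℝ → Fin n → ℝ)
    (hdyn : ∀ t : ℝ, HasDerivAt ϑtil
      (-γ • ((Ψ t)ᵀ *ᵥ (Ψ t *ᵥ ϑtil t)) + γ • ((Ψ t)ᵀ *ᵥ ε t)) t) :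
    Tendsto ϑtil atTop (nhds 0) ∧
    ∀ ν : ℝ, 0 < ν → ν < min (γ * δ) μ →
      ∃ C' : ℝ, 0 ≤ C' ∧ ∀ t : ℝ, 0 ≤ t →
        Real.sqrt (∑ j : Fin n, ϑtil t j ^ 2) ≤ C' * Real.exp (-ν * t) := by
  -- the Lyapunov function
  set V : ℝ → ℝ := fun t => ∑ j : Fin n, ϑtil t j ^ 2 with hVdef
  have hVnonneg : ∀ t, 0 ≤ V t := fun t => Finset.sum_nonneg fun j _ => sq_nonneg _
  -- the derivative vector
  set d : ℝ → Fin n → ℝ :=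
    fun t => -γ • ((Ψ t)ᵀ *ᵥ (Ψ t *ᵥ ϑtil t)) + γ • ((Ψ t)ᵀ *ᵥ ε t) with hddef
  set V' : ℝ → ℝ := fun t => ∑ j : Fin n, 2 * ϑtil t j * d t j with hV'def
  have hd : ∀ t, HasDerivAt V (V' t) t := by
    intro t
    have h := hasDerivAt_pi.1 (hdyn t)
    exact HasDerivAt.fun_sum fun j _ => by
      have h2 := (h j).fun_pow 2
      convert h2 using 1
      · rfl
      simp only [hddef]
      push_cast
      ring
  -- dot product identity
  have hdot : ∀ (A : Matrix (Fin n) (Fin n) ℝ) (x y : Fin n → ℝ),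
      ∑ j : Fin n, x j * (Aᵀ *ᵥ y) j = ∑ j : Fin n, (A *ᵥ x) j * y j := by
    intro A x y
    have h : x ⬝ᵥ (Aᵀ *ᵥ y) = (A *ᵥ x) ⬝ᵥ y := by
      rw [Matrix.dotProduct_mulVec, Matrix.vecMul_transpose]
    simpa [dotProduct] using h
  -- the main estimate
  have key : ∀ ν : ℝ, 0 < ν → ν < min (γ * δ) μ →
      ∃ C' : ℝ, 0 ≤ C' ∧ ∀ t : ℝ, 0 ≤ t →
        Real.sqrt (∑ j : Fin n, ϑtil t j ^ 2) ≤ C' * Real.exp (-ν * t) := by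
    intro ν hν hνlt
    have hν1 : ν < γ * δ := lt_of_lt_of_le hνlt (min_le_left _ _)
    have hν2 : ν < μ := lt_of_lt_of_le hνlt (min_le_right _ _)
    set a : ℝ := γ * δ - ν with hadef
    have ha : 0 < a := by simp [hadef]; linarith
    set m : ℝ := μ - ν with hmdef
    have hm : 0 < m := by simp [hmdef]; linarith
    set β : ℝ := (γ * K * C) ^ 2 / (2 * a) with hβdef
    have hβ : 0 ≤ β := by positivity
    set β2 : ℝ := β / (2 * m) with hβ2def
    have hβ2 : 0 ≤ β2 := by positivity
    -- differential inequality for V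
    have hVineq : ∀ t : ℝ, 0 ≤ t → V' t ≤ -(2 * ν) * V t + β * Real.exp (-(2 * μ) * t) := by
      intro t ht
      have hsplit : V' t = -(2 * γ) * (∑ j : Fin n, (Ψ t *ᵥ ϑtil t) j ^ 2)
          + 2 * γ * (∑ j : Fin n, (Ψ t *ᵥ ϑtil t) j * ε t j) := by
        have h1 := hdot (Ψ t) (ϑtil t) (Ψ t *ᵥ ϑtil t)
        have h2 := hdot (Ψ t) (ϑtil t) (ε t)
        simp only [hV'def, hddef, Pi.add_apply, Pi.smul_apply, smul_eq_mul]
        rw [show (∑ j : Fin n, 2 * ϑtil t j *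
            (-γ * ((Ψ t)ᵀ *ᵥ (Ψ t *ᵥ ϑtil t)) j + γ * ((Ψ t)ᵀ *ᵥ ε t) j))
          = -(2 * γ) * (∑ j : Fin n, ϑtil t j * ((Ψ t)ᵀ *ᵥ (Ψ t *ᵥ ϑtil t)) j)
            + 2 * γ * (∑ j : Fin n, ϑtil t j * ((Ψ t)ᵀ *ᵥ ε t) j) by
          rw [Finset.mul_sum, Finset.mul_sum, ← Finset.sum_add_distrib]
          exact Finset.sum_congr rfl fun j _ => by ring]
        rw [h1, h2]
        congr 1
        · rw [Finset.sum_congr rfl fun j _ => (sq ((Ψ t *ᵥ ϑtil t) j)).symm]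
      -- Cauchy-Schwarz and bounds
      have hCS : (∑ j : Fin n, (Ψ t *ᵥ ϑtil t) j * ε t j)
          ≤ (K * Real.sqrt (V t)) * (C * Real.exp (-μ * t)) := by
        calc (∑ j : Fin n, (Ψ t *ᵥ ϑtil t) j * ε t j)
            ≤ Real.sqrt (∑ j : Fin n, (Ψ t *ᵥ ϑtil t) j ^ 2) *
              Real.sqrt (∑ j : Fin n, ε t j ^ 2) :=
              Real.sum_mul_le_sqrt_mul_sqrt _ _ _
          _ ≤ (K * Real.sqrt (V t)) * (C * Real.exp (-μ * t)) := by
              apply mul_le_mul (hbound t ht (ϑtil t)) (hε t ht) (Real.sqrt_nonneg _)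
              positivity
      have hPEt : δ * V t ≤ ∑ j : Fin n, (Ψ t *ᵥ ϑtil t) j ^ 2 := hPE t ht (ϑtil t)
      -- Young's inequality : 2*b*s ≤ 2*a*s^2 + b^2/(2*a)
      set s : ℝ := Real.sqrt (V t) with hsdef
      set b : ℝ := γ * K * C * Real.exp (-μ * t) with hbdef
      have hb : 0 ≤ b := by positivity
      have hs2 : s ^ 2 = V t := Real.sq_sqrt (hVnonneg t)
      have hyoung : 2 * b * s ≤ 2 * a * s ^ 2 + b ^ 2 / (2 * a) := by
        have h2a : 0 < 2 * a := by linarith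
        have key2 : 2 * b * s - 2 * a * s ^ 2 ≤ b ^ 2 / (2 * a) := by
          rw [le_div_iff₀ h2a]
          nlinarith [sq_nonneg (2 * a * s - b)]
        linarith
      have hb2 : b ^ 2 = (γ * K * C) ^ 2 * Real.exp (-(2 * μ) * t) := by
        have he : Real.exp (-μ * t) * Real.exp (-μ * t) = Real.exp (-(2 * μ) * t) := by
          rw [← Real.exp_add]; ring_nf
        calc b ^ 2 = (γ * K * C) ^ 2 * (Real.exp (-μ * t) * Real.exp (-μ * t)) := by
              rw [hbdef]; ring
          _ = _ := by rw [he]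
      calc V' t = -(2 * γ) * (∑ j : Fin n, (Ψ t *ᵥ ϑtil t) j ^ 2)
            + 2 * γ * (∑ j : Fin n, (Ψ t *ᵥ ϑtil t) j * ε t j) := hsplit
        _ ≤ -(2 * γ) * (δ * V t) + 2 * γ * ((K * s) * (C * Real.exp (-μ * t))) := by
            have := mul_le_mul_of_nonneg_left hPEt (by linarith : (0:ℝ) ≤ 2 * γ)
            have := mul_le_mul_of_nonneg_left hCS (by linarith : (0:ℝ) ≤ 2 * γ)
            nlinarith [hPEt, hCS, hγ]
        _ = -(2 * (γ * δ)) * V t + 2 * b * s := by rw [hbdef]; ring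
        _ ≤ -(2 * (γ * δ)) * V t + (2 * a * s ^ 2 + b ^ 2 / (2 * a)) := by linarith
        _ = -(2 * ν) * V t + b ^ 2 / (2 * a) := by rw [hs2, hadef]; ring
        _ = -(2 * ν) * V t + β * Real.exp (-(2 * μ) * t) := by
            rw [hb2, hβdef]; ring
    -- the auxiliary monotone function
    set F : ℝ → ℝ := fun t => Real.exp (2 * ν * t) * V t + β2 * Real.exp (-(2 * m) * t)
      with hFdef
    have hF : ∀ t, HasDerivAt F
        (2 * ν * Real.exp (2 * ν * t) * V t + Real.exp (2 * ν * t) * V' t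
          + β2 * (Real.exp (-(2 * m) * t) * (-(2 * m)))) t := by
      intro t
      have h1 : HasDerivAt (fun u => 2 * ν * u) (2 * ν) t := by
        simpa using (hasDerivAt_id t).const_mul (2 * ν)
      have h2 : HasDerivAt (fun u => -(2 * m) * u) (-(2 * m)) t := by
        simpa using (hasDerivAt_id t).const_mul (-(2 * m))
      have he1 := h1.exp
      have he2 := h2.exp
      have := (he1.fun_mul (hd t)).fun_add (he2.const_mul β2)
      convert this using 1
      · rfl
      · rfl
      ring
    have hderiv : ∀ t : ℝ, 0 < t → deriv F t ≤ 0 := by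
      intro t ht
      rw [(hF t).deriv]
      have hV'le := hVineq t (le_of_lt ht)
      have hexp : Real.exp (2 * ν * t) * Real.exp (-(2 * μ) * t)
          = Real.exp (-(2 * m) * t) := by
        rw [← Real.exp_add]; congr 1; rw [hmdef]; ring
      have h1 : Real.exp (2 * ν * t) * V' t
          ≤ Real.exp (2 * ν * t) * (-(2 * ν) * V t + β * Real.exp (-(2 * μ) * t)) :=
        mul_le_mul_of_nonneg_left hV'le (le_of_lt (Real.exp_pos _))
      have h2 : β2 * (Real.exp (-(2 * m) * t) * (-(2 * m))) =
          -(β * Real.exp (-(2 * m) * t)) := by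
        rw [hβ2def]
        field_simp
      calc 2 * ν * Real.exp (2 * ν * t) * V t + Real.exp (2 * ν * t) * V' t
            + β2 * (Real.exp (-(2 * m) * t) * (-(2 * m)))
          ≤ 2 * ν * Real.exp (2 * ν * t) * V t
            + Real.exp (2 * ν * t) * (-(2 * ν) * V t + β * Real.exp (-(2 * μ) * t))
            + β2 * (Real.exp (-(2 * m) * t) * (-(2 * m))) := by linarith
        _ = Real.exp (2 * ν * t) * Real.exp (-(2 * μ) * t) * β
            + β2 * (Real.exp (-(2 * m) * t) * (-(2 * m))) := by ring
        _ = Real.exp (-(2 * m) * t) * β - β * Real.exp (-(2 * m) * t) := by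
            rw [hexp, h2]; ring
        _ = 0 := by ring
    have hFanti : AntitoneOn F (Set.Ici 0) := by
      apply antitoneOn_of_deriv_nonpos (convex_Ici 0)
      · exact fun t _ => ((hF t).differentiableAt).continuousAt.continuousWithinAt
      · exact fun t _ => ((hF t).differentiableAt).differentiableWithinAt
      · intro t ht
        rw [interior_Ici] at ht
        exact hderiv t ht
    set M : ℝ := V 0 + β2 with hMdef
    have hM : 0 ≤ M := by have := hVnonneg 0; linarith
    have hVle : ∀ t : ℝ, 0 ≤ t → V t ≤ M * Real.exp (-(2 * ν) * t) := by
      intro t ht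
      have hFt : F t ≤ F 0 := hFanti (Set.self_mem_Ici) ht ht
      have hF0 : F 0 = M := by simp [hFdef, hMdef]
      have h1 : Real.exp (2 * ν * t) * V t ≤ F t := by
        have : 0 ≤ β2 * Real.exp (-(2 * m) * t) := by positivity
        simp only [hFdef]; linarith
      have h2 : Real.exp (2 * ν * t) * V t ≤ M := by rw [← hF0]; linarith
      have he : Real.exp (2 * ν * t) * Real.exp (-(2 * ν) * t) = 1 := by
        rw [← Real.exp_add, show 2 * ν * t + -(2 * ν) * t = 0 by ring, Real.exp_zero]
      calc V t = Real.exp (2 * ν * t) * V t * Real.exp (-(2 * ν) * t) := by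
            rw [mul_comm (Real.exp (2 * ν * t)) (V t), mul_assoc, he, mul_one]
        _ ≤ M * Real.exp (-(2 * ν) * t) :=
            mul_le_mul_of_nonneg_right h2 (Real.exp_pos _).le
    refine ⟨Real.sqrt M, Real.sqrt_nonneg _, fun t ht => ?_⟩
    have h1 : Real.sqrt (V t) ≤ Real.sqrt (M * Real.exp (-(2 * ν) * t)) :=
      Real.sqrt_le_sqrt (hVle t ht)
    have h2 : Real.sqrt (M * Real.exp (-(2 * ν) * t))
        = Real.sqrt M * Real.exp (-ν * t) := by
      rw [Real.sqrt_mul hM]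
      congr 1
      rw [show (-(2 * ν) * t) = (-ν * t) + (-ν * t) by ring, Real.exp_add,
        ← sq, Real.sqrt_sq (le_of_lt (Real.exp_pos _))]
    calc Real.sqrt (∑ j : Fin n, ϑtil t j ^ 2) = Real.sqrt (V t) := rfl
      _ ≤ _ := by rw [← h2]; exact h1
  refine ⟨?_, key⟩
  -- convergence to zero
  set ν₀ : ℝ := min (γ * δ) μ / 2 with hν₀def
  have hmin : 0 < min (γ * δ) μ := lt_min (by positivity) hμ
  have hν₀ : 0 < ν₀ := by positivity
  have hν₀lt : ν₀ < min (γ * δ) μ := by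
    rw [hν₀def]; linarith
  obtain ⟨C', hC', hB⟩ := key ν₀ hν₀ hν₀lt
  have hnorm : ∀ t : ℝ, 0 ≤ t → ‖ϑtil t‖ ≤ C' * Real.exp (-ν₀ * t) := by
    intro t ht
    have h0 : (0:ℝ) ≤ C' * Real.exp (-ν₀ * t) := by positivity
    rw [pi_norm_le_iff_of_nonneg h0]
    intro j
    have h1 : |ϑtil t j| ≤ Real.sqrt (V t) := by
      rw [← Real.sqrt_sq_eq_abs]
      apply Real.sqrt_le_sqrt
      exact Finset.single_le_sum (fun i _ => sq_nonneg (ϑtil t i)) (Finset.mem_univ j)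
    calc ‖ϑtil t j‖ = |ϑtil t j| := rfl
      _ ≤ Real.sqrt (V t) := h1
      _ ≤ C' * Real.exp (-ν₀ * t) := hB t ht
  have hg : Tendsto (fun t : ℝ => C' * Real.exp (-ν₀ * t)) atTop (nhds 0) := by
    rw [show (0:ℝ) = C' * 0 by ring]
    apply Tendsto.const_mul
    apply Real.tendsto_exp_atBot.comp
    exact tendsto_id.const_mul_atTop_of_neg (by linarith)
  apply squeeze_zero_norm' _ hg
  filter_upwards [eventually_ge_atTop (0:ℝ)] with t ht
  exact hnorm t ht
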